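/- Let |ψ(t)⟩ = Σ_n c_n e^{−iE_n t}|n⟩ be a state evolving under a Hamiltonian with orthonormal eigenstates |n⟩ and real eigenvalues E_n, with Σ_n |c_n|² = 1. Then for all real t, δt: |⟨ψ(t)|ψ(t+δt)⟩|² ≥ 1 − σ_E² δt², where σ_E² = Σ_n |c_n|² E_n² − (Σ_n |c_n|² E_n)² is the energy variance. -/

import Mathlib

private lemma sum_lin {N : ℕ} (p θ : Fin N → ℝ) (a b d : ℝ) :
    ∑ m, (a * p m + b * (p m * θ m) + d * (p m * θ m ^ 2))
      = a * ∑ m, p m + b * ∑ m, p m * θ m + d * ∑ m, p m * θ m ^ 2 := by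
  rw [Finset.sum_add_distrib, Finset.sum_add_distrib, Finset.mul_sum, Finset.mul_sum,
    Finset.mul_sum]

theorem overlap_lower_bound_energy_variance {N : ℕ}
    (c : Fin N → ℂ) (E : Fin N → ℝ)
    (hnorm : ∑ n, ‖c n‖ ^ 2 = 1)
    (t δt : ℝ) :
    ‖(∑ n, (starRingEnd ℂ) (c n * Complex.exp (-Complex.I * E n * t)) *
        (c n * Complex.exp (-Complex.I * E n * (t + δt))))‖ ^ 2 ≥
      1 - ((∑ n, ‖c n‖ ^ 2 * E n ^ 2) - (∑ n, ‖c n‖ ^ 2 * E n) ^ 2) * δt ^ 2 := by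
  set p : Fin N → ℝ := fun n => ‖c n‖ ^ 2 with hp
  set θ : Fin N → ℝ := fun n => E n * δt with hθ
  have hterm : ∀ n, (starRingEnd ℂ) (c n * Complex.exp (-Complex.I * E n * t)) *
      (c n * Complex.exp (-Complex.I * E n * (t + δt)))
      = (p n : ℂ) * ((Real.cos (θ n) : ℂ) - (Real.sin (θ n) : ℂ) * Complex.I) := by
    intro n
    have h1 : (starRingEnd ℂ) (Complex.exp (-Complex.I * E n * t)) *
        Complex.exp (-Complex.I * E n * (t + δt)) = Complex.exp (-Complex.I * E n * δt) := by
      rw [← Complex.exp_conj, ← Complex.exp_add]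
      congr 1
      simp [Complex.ext_iff]
      ring
    have h2 : (starRingEnd ℂ) (c n) * c n = (p n : ℂ) := by
      rw [← Complex.normSq_eq_conj_mul_self]
      simp [hp, Complex.normSq_eq_norm_sq]
    have h3 : Complex.exp (-Complex.I * E n * δt)
        = (Real.cos (θ n) : ℂ) - (Real.sin (θ n) : ℂ) * Complex.I := by
      have harg : (-Complex.I * E n * δt) = ((-(θ n) : ℝ) : ℂ) * Complex.I := by
        push_cast [hθ]; ring
      rw [harg, Complex.exp_mul_I, ← Complex.ofReal_cos, ← Complex.ofReal_sin,
        Real.cos_neg, Real.sin_neg]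
      push_cast
      ring
    calc (starRingEnd ℂ) (c n * Complex.exp (-Complex.I * E n * t)) *
        (c n * Complex.exp (-Complex.I * E n * (t + δt)))
        = ((starRingEnd ℂ) (c n) * c n) * ((starRingEnd ℂ) (Complex.exp (-Complex.I * E n * t)) *
          Complex.exp (-Complex.I * E n * (t + δt))) := by rw [map_mul]; ring
      _ = _ := by rw [h1, h2, h3]
  have hsum : (∑ n, (starRingEnd ℂ) (c n * Complex.exp (-Complex.I * E n * t)) *
      (c n * Complex.exp (-Complex.I * E n * (t + δt))))
      = (((∑ n, p n * Real.cos (θ n) : ℝ)) : ℂ)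
        + (((-∑ n, p n * Real.sin (θ n) : ℝ)) : ℂ) * Complex.I := by
    rw [Finset.sum_congr rfl (fun n _ => hterm n)]
    simp_rw [mul_sub, Finset.sum_sub_distrib]
    push_cast
    simp_rw [← mul_assoc]
    rw [← Finset.sum_mul]
    ring
  rw [hsum]
  set A : ℝ := ∑ n, p n * Real.cos (θ n)
  set B : ℝ := ∑ n, p n * Real.sin (θ n)
  have habs : ‖(A : ℂ) + ((-B : ℝ) : ℂ) * Complex.I‖ ^ 2 = A ^ 2 + B ^ 2 := by
    rw [Complex.sq_norm, Complex.normSq_add_mul_I]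
    ring
  rw [habs]
  have hpnn : ∀ n, 0 ≤ p n := fun n => by positivity
  have hAB : A ^ 2 + B ^ 2 = ∑ n, ∑ m, p n * p m *
      (Real.cos (θ n) * Real.cos (θ m) + Real.sin (θ n) * Real.sin (θ m)) := by
    have hA : A ^ 2 = ∑ n, ∑ m, (p n * Real.cos (θ n)) * (p m * Real.cos (θ m)) := by
      rw [sq, Finset.sum_mul_sum]
    have hB : B ^ 2 = ∑ n, ∑ m, (p n * Real.sin (θ n)) * (p m * Real.sin (θ m)) := by
      rw [sq, Finset.sum_mul_sum]
    rw [hA, hB, ← Finset.sum_add_distrib]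
    refine Finset.sum_congr rfl fun n _ => ?_
    rw [← Finset.sum_add_distrib]
    exact Finset.sum_congr rfl fun m _ => by ring
  have hlow : ∑ n, ∑ m, p n * p m * (1 - (θ n - θ m) ^ 2 / 2) ≤ A ^ 2 + B ^ 2 := by
    rw [hAB]
    refine Finset.sum_le_sum fun n _ => Finset.sum_le_sum fun m _ => ?_
    have hc : Real.cos (θ n) * Real.cos (θ m) + Real.sin (θ n) * Real.sin (θ m)
        = Real.cos (θ n - θ m) := (Real.cos_sub _ _).symm
    rw [hc]
    exact mul_le_mul_of_nonneg_left (Real.one_sub_sq_div_two_le_cos)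
      (mul_nonneg (hpnn n) (hpnn m))
  set S1 : ℝ := ∑ n, p n with hS1
  set Sθ : ℝ := ∑ n, p n * θ n with hSθ
  set Sθ2 : ℝ := ∑ n, p n * θ n ^ 2 with hSθ2
  have hP : S1 = 1 := hnorm
  have inner : ∀ n, ∑ m, p n * p m * (1 - (θ n - θ m) ^ 2 / 2)
      = (p n - p n * θ n ^ 2 / 2) * S1 + (p n * θ n) * Sθ + (-(p n) / 2) * Sθ2 := by
    intro n
    calc ∑ m, p n * p m * (1 - (θ n - θ m) ^ 2 / 2)
        = ∑ m, ((p n - p n * θ n ^ 2 / 2) * p m + (p n * θ n) * (p m * θ m)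
            + (-(p n) / 2) * (p m * θ m ^ 2)) := Finset.sum_congr rfl fun m _ => by ring
      _ = _ := sum_lin p θ _ _ _
  have hcalc : ∑ n, ∑ m, p n * p m * (1 - (θ n - θ m) ^ 2 / 2)
      = 1 - (Sθ2 - Sθ ^ 2) := by
    rw [Finset.sum_congr rfl (fun n _ => inner n)]
    calc ∑ n, ((p n - p n * θ n ^ 2 / 2) * S1 + (p n * θ n) * Sθ + (-(p n) / 2) * Sθ2)
        = ∑ n, ((S1 - Sθ2 / 2) * p n + Sθ * (p n * θ n) + (-S1 / 2) * (p n * θ n ^ 2)) :=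
          Finset.sum_congr rfl fun n _ => by ring
      _ = (S1 - Sθ2 / 2) * S1 + Sθ * Sθ + (-S1 / 2) * Sθ2 := sum_lin p θ _ _ _
      _ = 1 - (Sθ2 - Sθ ^ 2) := by rw [hP]; ring
  have hθ2 : Sθ2 = (∑ n, p n * E n ^ 2) * δt ^ 2 := by
    rw [hSθ2, Finset.sum_mul]
    exact Finset.sum_congr rfl fun n _ => by rw [hθ]; ring
  have hθ1 : Sθ = (∑ n, p n * E n) * δt := by
    rw [hSθ, Finset.sum_mul]
    exact Finset.sum_congr rfl fun n _ => by rw [hθ]; ring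
  calc 1 - ((∑ n, p n * E n ^ 2) - (∑ n, p n * E n) ^ 2) * δt ^ 2
      = 1 - (Sθ2 - Sθ ^ 2) := by rw [hθ2, hθ1]; ring
    _ = ∑ n, ∑ m, p n * p m * (1 - (θ n - θ m) ^ 2 / 2) := hcalc.symm
    _ ≤ A ^ 2 + B ^ 2 := hlow
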